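/- arXiv:1802.10302 — 3 statements merged into one kernel-verified Lean document; each statement's English description precedes it below -/
import Mathlib

section
/- If Y_1, ..., Y_n are independent random variables with P(a ≤ Y_i ≤ b) = 1 for all i where a < b, then for every t > 0, P(∑_{i=1}^n (Y_i - E[Y_i]) ≥ n t) ≤ exp(-2 n t² / (b - a)²). -/
open MeasureTheory ProbabilityTheory Filter Set
open scoped Classical

noncomputable def orderStat (n k : ℕ) (f : ℕ → ℝ) : ℝ :=
  sInf {x : ℝ | k ≤ ((Finset.range n).filter (fun i => f i ≤ x)).card}

noncomputable def empCDF (n : ℕ) (f : ℕ → ℝ) (x : ℝ) : ℝ :=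
  (((Finset.range n).filter (fun i => f i ≤ x)).card : ℝ) / n

variable {Ω : Type*}

/-- Bootstrap sample: `X (J n i ω) ω`, where the `J n i` are i.i.d. uniform
selection indices on `{0, ..., n-1}`, independent of the data `X`. -/
noncomputable def bsample (X : ℕ → Ω → ℝ) (J : ℕ → ℕ → Ω → ℕ) (n i : ℕ) (ω : Ω) : ℝ :=
  X (J n i ω) ω

/-- `v̂*_{n,l}`, the `⌊(n+l)/2⌋`-th bootstrap order statistic. -/
noncomputable def bmed (X : ℕ → Ω → ℝ) (J : ℕ → ℕ → Ω → ℕ) (n l : ℕ) (ω : Ω) : ℝ :=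
  orderStat n ((n + l) / 2) (fun i => bsample X J n i ω)

/-- `ξ̂*_{n,m,l}`, the `⌊(n+m)/2⌋`-th order statistic of `|X*_i - v̂*_{n,l}|`. -/
noncomputable def bmad (X : ℕ → Ω → ℝ) (J : ℕ → ℕ → Ω → ℕ) (n m l : ℕ) (ω : Ω) : ℝ :=
  orderStat n ((n + m) / 2) (fun i => |bsample X J n i ω - bmed X J n l ω|)

/-- Bootstrap empirical CDF `F*_n`. -/
noncomputable def bECDF (X : ℕ → Ω → ℝ) (J : ℕ → ℕ → Ω → ℕ) (n : ℕ) (ω : Ω) (x : ℝ) : ℝ :=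
  empCDF n (fun i => bsample X J n i ω) x

/-- Bootstrap sample median `Med*_n`. -/
noncomputable def bMedStar (X : ℕ → Ω → ℝ) (J : ℕ → ℕ → Ω → ℕ) (n : ℕ) (ω : Ω) : ℝ :=
  (bmed X J n 1 ω + bmed X J n 2 ω) / 2

/-- Bootstrap sample MAD `MAD*_n`. -/
noncomputable def bMADStar (X : ℕ → Ω → ℝ) (J : ℕ → ℕ → Ω → ℕ) (n : ℕ) (ω : Ω) : ℝ :=
  (orderStat n ((n + 1) / 2) (fun i => |bsample X J n i ω - bMedStar X J n ω|)
    + orderStat n ((n + 2) / 2) (fun i => |bsample X J n i ω - bMedStar X J n ω|)) / 2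

/-- One-dimensional projection depth `PD(x, F) = 1/(1+|x-v|/ξ)`. -/
noncomputable def pdepth (v ξ x : ℝ) : ℝ := 1 / (1 + |x - v| / ξ)

/-- Projection depth weighted mean `PWM(F)`. -/
noncomputable def pwm (μ : Measure ℝ) (w : ℝ → ℝ) (v ξ : ℝ) : ℝ :=
  (∫ x, x * w (pdepth v ξ x) ∂μ) / (∫ x, w (pdepth v ξ x) ∂μ)

/-- The kernel `f(x,y)` of the Bahadur representation of the projection depth. -/
noncomputable def fker (F : ℝ → ℝ) (v ξ x y : ℝ) : ℝ :=
  |x - v| / (ξ + |x - v|) ^ 2 *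
      ((1 / 2 - if v - ξ < y ∧ y ≤ v + ξ then 1 else 0)
        / (deriv F (v - ξ) + deriv F (v + ξ)))
    + (|x - v| * (deriv F (v + ξ) - deriv F (v - ξ)) /
          ((deriv F (v - ξ) + deriv F (v + ξ)) * (ξ + |x - v|) ^ 2)
        + ξ * Real.sign (x - v) / (ξ + |x - v|) ^ 2) *
      ((1 / 2 - if y ≤ v then 1 else 0) / deriv F v)

/-- The influence-type function `K(x)`. -/
noncomputable def Kfun (μ : Measure ℝ) (F w : ℝ → ℝ) (v ξ x : ℝ) : ℝ :=
  ((∫ y, (y - pwm μ w v ξ) * deriv w (pdepth v ξ y) * fker F v ξ y x ∂μ)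
      + (x - pwm μ w v ξ) * w (pdepth v ξ x)) / (∫ x, w (pdepth v ξ x) ∂μ)

/-- Bootstrap sample projection depth weighted mean `PWM(F*_n)`. -/
noncomputable def pwmStar (X : ℕ → Ω → ℝ) (J : ℕ → ℕ → Ω → ℕ) (w : ℝ → ℝ) (n : ℕ) (ω : Ω) : ℝ :=
  (∑ i ∈ Finset.range n,
      w (pdepth (bMedStar X J n ω) (bMADStar X J n ω) (bsample X J n i ω)) * bsample X J n i ω) /
    (∑ i ∈ Finset.range n,
      w (pdepth (bMedStar X J n ω) (bMADStar X J n ω) (bsample X J n i ω)))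


section HoeffdingAux
open Real

lemma hoeff_D_pos {p : ℝ} (hp0 : 0 ≤ p) (hp1 : p ≤ 1) (h : ℝ) :
    0 < (1 - p) + p * exp h := by
  rcases eq_or_lt_of_le hp1 with rfl | hlt
  · simpa using exp_pos h
  · have := exp_pos h
    nlinarith

lemma hoeff_g2_nonneg {p : ℝ} (hp0 : 0 ≤ p) (hp1 : p ≤ 1) (h : ℝ) :
    0 ≤ 1/4 - p * (1 - p) * exp h / ((1 - p) + p * exp h) ^ 2 := by
  have hD := hoeff_D_pos hp0 hp1 h
  rw [sub_nonneg, div_le_iff₀ (by positivity)]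
  nlinarith [sq_nonneg ((1 - p) - p * exp h), exp_pos h]

lemma hoeff_hasDerivAt_g1 {p : ℝ} (hp0 : 0 ≤ p) (hp1 : p ≤ 1) (h : ℝ) :
    HasDerivAt (fun x => x/4 + p - p * exp x / ((1 - p) + p * exp x))
      (1/4 - p * (1 - p) * exp h / ((1 - p) + p * exp h) ^ 2) h := by
  have hD := hoeff_D_pos hp0 hp1 h
  have hnum : HasDerivAt (fun x => p * exp x) (p * exp h) h :=
    (Real.hasDerivAt_exp h).const_mul p
  have hden : HasDerivAt (fun x => (1 - p) + p * exp x) (p * exp h) h :=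
    (hnum).const_add (1 - p)
  have hq := hnum.div hden hD.ne'
  have hlin : HasDerivAt (fun x : ℝ => x/4 + p) (1/4) h := by
    simpa using ((hasDerivAt_id h).div_const 4).add_const p
  refine (hlin.sub hq).congr_deriv ?_
  ring

lemma hoeff_hasDerivAt_g {p : ℝ} (hp0 : 0 ≤ p) (hp1 : p ≤ 1) (h : ℝ) :
    HasDerivAt (fun x => x^2/8 + p*x - Real.log ((1 - p) + p * exp x))
      (h/4 + p - p * exp h / ((1 - p) + p * exp h)) h := by
  have hD := hoeff_D_pos hp0 hp1 h
  have hden : HasDerivAt (fun x => (1 - p) + p * exp x) (p * exp h) h :=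
    ((Real.hasDerivAt_exp h).const_mul p).const_add (1 - p)
  have hlog := hden.log hD.ne'
  have h1 : HasDerivAt (fun x : ℝ => x^2/8 + p*x) (h/4 + p) h := by
    have := ((hasDerivAt_pow 2 h).div_const 8).add ((hasDerivAt_id h).const_mul p)
    refine this.congr_deriv ?_
    ring
  exact h1.sub hlog

lemma hoeff_key {p : ℝ} (hp0 : 0 ≤ p) (hp1 : p ≤ 1) (h : ℝ) :
    (1 - p) * exp (-p * h) + p * exp ((1 - p) * h) ≤ exp (h^2/8) := by
  set g : ℝ → ℝ := fun x => x^2/8 + p*x - Real.log ((1 - p) + p * exp x) with hg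
  set g1 : ℝ → ℝ := fun x => x/4 + p - p * exp x / ((1 - p) + p * exp x) with hg1
  have hg1diff : ∀ x, HasDerivAt g1 (1/4 - p * (1 - p) * exp x / ((1 - p) + p * exp x) ^ 2) x :=
    fun x => hoeff_hasDerivAt_g1 hp0 hp1 x
  have hg1mono : Monotone g1 := by
    have : ∀ x, 0 ≤ deriv g1 x := fun x => by
      rw [(hg1diff x).deriv]; exact hoeff_g2_nonneg hp0 hp1 x
    exact monotone_of_deriv_nonneg (fun x => (hg1diff x).differentiableAt) this
  have hg10 : g1 0 = 0 := by
    have hD := hoeff_D_pos hp0 hp1 0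
    simp only [hg1]
    rw [Real.exp_zero]
    field_simp
    ring
  have hgderiv : ∀ x, HasDerivAt g (g1 x) x := fun x => hoeff_hasDerivAt_g hp0 hp1 x
  have hgdiff : Differentiable ℝ g := fun x => (hgderiv x).differentiableAt
  have hg0 : g 0 = 0 := by simp [hg]
  have hgnonneg : ∀ x, 0 ≤ g x := by
    intro x
    rcases le_total 0 x with hx | hx
    · have hmono : MonotoneOn g (Set.Ici 0) := by
        apply monotoneOn_of_deriv_nonneg (convex_Ici 0) hgdiff.continuous.continuousOn
          (fun y _ => hgdiff y |>.differentiableWithinAt)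
        intro y hy
        rw [(hgderiv y).deriv, ← hg10]
        exact hg1mono (le_of_lt (by simpa using hy))
      rw [← hg0]
      exact hmono (Set.self_mem_Ici) hx hx
    · have hmono : AntitoneOn g (Set.Iic 0) := by
        apply antitoneOn_of_deriv_nonpos (convex_Iic 0) hgdiff.continuous.continuousOn
          (fun y _ => hgdiff y |>.differentiableWithinAt)
        intro y hy
        rw [(hgderiv y).deriv, ← hg10]
        exact hg1mono (le_of_lt (by simpa using hy))
      rw [← hg0]
      exact hmono hx Set.self_mem_Iic hx
  have hD := hoeff_D_pos hp0 hp1 h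
  have hlog : Real.log ((1 - p) + p * exp h) ≤ h^2/8 + p*h := by
    have := hgnonneg h
    simp only [hg] at this
    linarith
  have hDle : (1 - p) + p * exp h ≤ exp (h^2/8 + p*h) := by
    calc (1 - p) + p * exp h = exp (Real.log ((1 - p) + p * exp h)) := (Real.exp_log hD).symm
    _ ≤ exp (h^2/8 + p*h) := exp_le_exp.mpr hlog
  have key : (1 - p) * exp (-p * h) + p * exp ((1 - p) * h)
      = exp (-p*h) * ((1 - p) + p * exp h) := by
    have h2 : exp ((1 - p) * h) = exp (-p*h) * exp h := by
      rw [← Real.exp_add]; congr 1; ring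
    rw [h2]; ring
  rw [key]
  calc exp (-p*h) * ((1 - p) + p * exp h)
      ≤ exp (-p*h) * exp (h^2/8 + p*h) := by
        exact mul_le_mul_of_nonneg_left hDle (exp_pos _).le
    _ = exp (h^2/8) := by rw [← Real.exp_add]; congr 1; ring


lemma hoeff_exp_affine {a b s z : ℝ} (hab : a < b) (hz : z ∈ Set.Icc a b) :
    exp (s * z) ≤ (b - z)/(b - a) * exp (s * a) + (z - a)/(b - a) * exp (s * b) := by
  have hba : (0:ℝ) < b - a := by linarith
  obtain ⟨hz1, hz2⟩ := hz
  have hθ1 : 0 ≤ (b - z)/(b - a) := div_nonneg (by linarith) hba.le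
  have hθ2 : 0 ≤ (z - a)/(b - a) := div_nonneg (by linarith) hba.le
  have hsum : (b - z)/(b - a) + (z - a)/(b - a) = 1 := by field_simp; ring
  have := convexOn_exp.2 (Set.mem_univ (s * a)) (Set.mem_univ (s * b)) hθ1 hθ2 hsum
  simp only [smul_eq_mul] at this
  have harg : (b - z)/(b - a) * (s * a) + (z - a)/(b - a) * (s * b) = s * z := by
    field_simp; ring
  rwa [harg] at this

lemma hoeff_mgf_le {Ω : Type*} [MeasureSpace Ω] [IsProbabilityMeasure (ℙ : Measure Ω)]
    {Z : Ω → ℝ} (hZm : Measurable Z) (hZi : Integrable Z ℙ)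
    {a b : ℝ} (hab : a < b) (ha : a ≤ 0) (hb : 0 ≤ b)
    (hbd : ∀ᵐ ω ∂(ℙ : Measure Ω), Z ω ∈ Set.Icc a b)
    (hmean : ∫ ω, Z ω ∂ℙ = 0) (s : ℝ) :
    mgf Z ℙ s ≤ exp (s^2 * (b - a)^2 / 8) := by
  have hba : (0:ℝ) < b - a := by linarith
  set A : ℝ := (exp (s*a) * b - exp (s*b) * a) / (b - a) with hA
  set B : ℝ := (exp (s*b) - exp (s*a)) / (b - a) with hB
  -- integrability of exp (s * Z)
  have hexpmeas : AEStronglyMeasurable (fun ω => exp (s * Z ω)) ℙ :=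
    ((hZm.const_mul s).exp).aestronglyMeasurable
  have hexpint : Integrable (fun ω => exp (s * Z ω)) ℙ := by
    refine Integrable.mono' (integrable_const (exp (|s| * (|a| + |b|)))) hexpmeas ?_
    filter_upwards [hbd] with ω hω
    obtain ⟨h1, h2⟩ := hω
    have habs : |Z ω| ≤ |a| + |b| := by
      rw [abs_le]
      constructor
      · have := neg_abs_le a; nlinarith [abs_nonneg b]
      · have := le_abs_self b; nlinarith [abs_nonneg a]
    rw [Real.norm_eq_abs, abs_exp]
    apply exp_le_exp.mpr
    calc s * Z ω ≤ |s * Z ω| := le_abs_self _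
    _ = |s| * |Z ω| := abs_mul s _
    _ ≤ |s| * (|a| + |b|) := by
        exact mul_le_mul_of_nonneg_left habs (abs_nonneg s)
  have haffint : Integrable (fun ω => A + B * Z ω) ℙ :=
    (integrable_const A).add (hZi.const_mul B)
  have hptwise : ∀ᵐ ω ∂(ℙ : Measure Ω), exp (s * Z ω) ≤ A + B * Z ω := by
    filter_upwards [hbd] with ω hω
    refine (hoeff_exp_affine hab hω).trans_eq ?_
    rw [hA, hB]
    field_simp
    ring
  have hint_le : mgf Z ℙ s ≤ ∫ ω, (A + B * Z ω) ∂ℙ := by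
    exact integral_mono_ae hexpint haffint hptwise
  have hcalc : ∫ ω, (A + B * Z ω) ∂ℙ = A := by
    rw [integral_add (integrable_const A) (hZi.const_mul B), integral_const,
      integral_const_mul, hmean]
    simp
  rw [hcalc] at hint_le
  refine hint_le.trans ?_
  -- apply the key analytic lemma
  set p : ℝ := -a / (b - a) with hp
  have hp0 : 0 ≤ p := by
    apply div_nonneg (by linarith) hba.le
  have hp1 : p ≤ 1 := by
    rw [hp, div_le_one hba]; linarith
  have hkey := hoeff_key hp0 hp1 (s * (b - a))
  have e1 : -p * (s * (b - a)) = s * a := by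
    rw [hp]; field_simp
  have e2 : (1 - p) * (s * (b - a)) = s * b := by
    rw [hp]; field_simp; ring
  have e3 : (1 - p) = b / (b - a) := by
    rw [hp]; field_simp; ring
  have e4 : (s * (b - a))^2 / 8 = s^2 * (b - a)^2 / 8 := by ring
  rw [e1, e2, e4, e3] at hkey
  refine le_trans (le_of_eq ?_) hkey
  rw [hA, hp]
  field_simp
  ring


lemma hoeff_exp_int {Ω : Type*} [MeasureSpace Ω] [IsProbabilityMeasure (ℙ : Measure Ω)]
    {Z : Ω → ℝ} (hZm : Measurable Z) {a b : ℝ}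
    (hbd : ∀ᵐ ω ∂(ℙ : Measure Ω), Z ω ∈ Set.Icc a b) (s : ℝ) :
    Integrable (fun ω => exp (s * Z ω)) ℙ := by
  refine Integrable.mono' (integrable_const (exp (|s| * (|a| + |b|))))
    ((hZm.const_mul s).exp).aestronglyMeasurable ?_
  filter_upwards [hbd] with ω hω
  obtain ⟨h1, h2⟩ := hω
  have habs : |Z ω| ≤ |a| + |b| := by
    rw [abs_le]
    constructor
    · have := neg_abs_le a; nlinarith [abs_nonneg b]
    · have := le_abs_self b; nlinarith [abs_nonneg a]
  rw [Real.norm_eq_abs, abs_exp]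
  apply exp_le_exp.mpr
  calc s * Z ω ≤ |s * Z ω| := le_abs_self _
  _ = |s| * |Z ω| := abs_mul s _
  _ ≤ |s| * (|a| + |b|) := mul_le_mul_of_nonneg_left habs (abs_nonneg s)


end HoeffdingAux

open Real in
theorem hoeffding_inequality {Ω : Type*} [MeasureSpace Ω]
    [IsProbabilityMeasure (ℙ : Measure Ω)]
    (n : ℕ) (Y : Fin n → Ω → ℝ)
    (hmeas : ∀ i, Measurable (Y i))
    (hindep : iIndepFun Y ℙ)
    (hint : ∀ i, Integrable (Y i) ℙ)
    (a b : ℝ) (hab : a < b)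
    (hbound : ∀ i, ℙ {ω | Y i ω ∈ Icc a b} = 1)
    (t : ℝ) (ht : 0 < t) :
    ℙ {ω | (n : ℝ) * t ≤ ∑ i, (Y i ω - ∫ ω', Y i ω' ∂ℙ)} ≤
      ENNReal.ofReal (Real.exp (-2 * n * t ^ 2 / (b - a) ^ 2)) := by
  have hba : (0:ℝ) < b - a := by linarith
  set μi : Fin n → ℝ := fun i => ∫ ω', Y i ω' ∂ℙ with hμi
  set Z : Fin n → Ω → ℝ := fun i ω => Y i ω - μi i with hZdef
  have hZm : ∀ i, Measurable (Z i) := fun i => (hmeas i).sub measurable_const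
  have hae : ∀ i, ∀ᵐ ω ∂(ℙ : Measure Ω), Y i ω ∈ Set.Icc a b := by
    intro i
    have hms : MeasurableSet {ω | Y i ω ∈ Set.Icc a b} := (hmeas i) measurableSet_Icc
    rw [ae_iff]
    have he : {ω | ¬ Y i ω ∈ Set.Icc a b} = {ω | Y i ω ∈ Set.Icc a b}ᶜ := rfl
    rw [he, prob_compl_eq_zero_iff hms]
    exact hbound i
  have hμa : ∀ i, a ≤ μi i := by
    intro i
    have h := integral_mono_ae (integrable_const a) (hint i)
      ((hae i).mono fun ω h => h.1)
    simpa using h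
  have hμb : ∀ i, μi i ≤ b := by
    intro i
    have h := integral_mono_ae (hint i) (integrable_const b)
      ((hae i).mono fun ω h => h.2)
    simpa using h
  have hZae : ∀ i, ∀ᵐ ω ∂(ℙ : Measure Ω), Z i ω ∈ Set.Icc (a - μi i) (b - μi i) := by
    intro i
    filter_upwards [hae i] with ω hω
    exact ⟨by simp [hZdef]; linarith [hω.1], by simp [hZdef]; linarith [hω.2]⟩
  have hZmean : ∀ i, ∫ ω, Z i ω ∂ℙ = 0 := by
    intro i
    simp only [hZdef]
    rw [integral_sub (hint i) (integrable_const _), integral_const]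
    simp [hμi]
  have hZint : ∀ i, Integrable (Z i) ℙ := fun i => (hint i).sub (integrable_const _)
  set s : ℝ := 4 * t / (b - a)^2 with hs
  have hspos : 0 < s := by positivity
  have hmgf : ∀ i, mgf (Z i) ℙ s ≤ exp (s^2 * (b - a)^2 / 8) := by
    intro i
    have h1 : a - μi i < b - μi i := by linarith
    have h2 : a - μi i ≤ 0 := by linarith [hμa i]
    have h3 : 0 ≤ b - μi i := by linarith [hμb i]
    have := hoeff_mgf_le (hZm i) (hZint i) h1 h2 h3 (hZae i) (hZmean i) s
    have he : b - μi i - (a - μi i) = b - a := by ring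
    rwa [he] at this
  have hexpint : ∀ i, Integrable (fun ω => exp (s * Z i ω)) ℙ := fun i =>
    hoeff_exp_int (hZm i) (hZae i) s
  have hindepZ : iIndepFun Z ℙ := by
    have := hindep.comp (fun i (x : ℝ) => x - μi i)
      (fun i => measurable_id.sub measurable_const)
    exact this
  have hint_sum : Integrable (fun ω => exp (s * (∑ i, Z i) ω)) ℙ :=
    hindepZ.integrable_exp_mul_sum hZm (fun i _ => hexpint i)
  have hcher := measure_ge_le_exp_mul_mgf (μ := ℙ) (X := ∑ i, Z i)
    ((n : ℝ) * t) hspos.le hint_sum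
  have hset : {ω | (n : ℝ) * t ≤ ∑ i, (Y i ω - ∫ ω', Y i ω' ∂ℙ)}
      = {ω | (n : ℝ) * t ≤ (∑ i, Z i) ω} := by
    ext ω
    simp only [Set.mem_setOf_eq, Finset.sum_apply, hZdef, hμi]
  rw [hset]
  rw [ENNReal.le_ofReal_iff_toReal_le (measure_ne_top _ _) (exp_pos _).le]
  refine hcher.trans ?_
  rw [hindepZ.mgf_sum hZm Finset.univ]
  have hprod : ∏ i, mgf (Z i) ℙ s ≤ exp ((n:ℝ) * (s^2 * (b - a)^2 / 8)) := by
    calc ∏ i, mgf (Z i) ℙ s ≤ ∏ _i : Fin n, exp (s^2 * (b - a)^2 / 8) :=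
        Finset.prod_le_prod (fun i _ => mgf_nonneg) (fun i _ => hmgf i)
    _ = exp ((n:ℝ) * (s^2 * (b - a)^2 / 8)) := by
        rw [Finset.prod_const, Finset.card_univ, Fintype.card_fin, Real.exp_nat_mul]
  calc exp (-s * ((n:ℝ) * t)) * ∏ i, mgf (Z i) ℙ s
      ≤ exp (-s * ((n:ℝ) * t)) * exp ((n:ℝ) * (s^2 * (b - a)^2 / 8)) :=
        mul_le_mul_of_nonneg_left hprod (exp_pos _).le
  _ = exp (-2 * n * t ^ 2 / (b - a) ^ 2) := by
      rw [← Real.exp_add]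
      congr 1
      rw [hs]
      field_simp
      ring
end

section
/- Let {U_n} and {V_n} be sequences of random variables on a common probability space such that (a) V_n = O_p(1) as n → ∞, and (b) for all real t and all ε > 0, lim_{n→∞} P(U_n ≥ t + ε, V_n ≤ t) = 0 and lim_{n→∞} P(U_n ≤ t, V_n ≥ t + ε) = 0. Then U_n - V_n → 0 in probability as n → ∞. -/
open MeasureTheory ProbabilityTheory Filter Set
open scoped Classical

variable {Ω : Type*}

theorem ghosh_lemma {Ω : Type*} [MeasureSpace Ω] [IsProbabilityMeasure (ℙ : Measure Ω)]
    (U V : ℕ → Ω → ℝ)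
    (hV : ∀ ε > (0 : ℝ), ∃ M : ℝ, ∀ᶠ n : ℕ in atTop,
      ℙ {ω | M < |V n ω|} < ENNReal.ofReal ε)
    (hb1 : ∀ (t ε : ℝ), 0 < ε →
      Tendsto (fun n => ℙ {ω | t + ε ≤ U n ω ∧ V n ω ≤ t}) atTop (nhds 0))
    (hb2 : ∀ (t ε : ℝ), 0 < ε →
      Tendsto (fun n => ℙ {ω | U n ω ≤ t ∧ t + ε ≤ V n ω}) atTop (nhds 0)) :
    ∀ δ > (0 : ℝ), Tendsto (fun n => ℙ {ω | δ < |U n ω - V n ω|}) atTop (nhds 0) := by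
  intro δ hδ
  rw [ENNReal.tendsto_atTop_zero]
  intro ε hε
  obtain ⟨r, hr0, hrε⟩ : ∃ r : ℝ, 0 < r ∧ ENNReal.ofReal r ≤ ε := by
    rcases eq_or_ne ε ⊤ with h | h
    · exact ⟨1, one_pos, by simp [h]⟩
    · exact ⟨ε.toReal, ENNReal.toReal_pos hε.ne' h, ENNReal.ofReal_toReal_le⟩
  obtain ⟨M, hM⟩ := hV (r / 2) (by linarith)
  set M' : ℝ := max M 1 with hM'def
  have hM'1 : (1 : ℝ) ≤ M' := le_max_right _ _
  set N : ℕ := ⌈(4 * M' + 2 * δ) / δ⌉₊ with hNdef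
  set t : ℕ → ℝ := fun j => -M' - δ + j * (δ / 2) with htdef
  have hδ2 : (0 : ℝ) < δ / 2 := by linarith
  have grid : ∀ a : ℝ, -M' - δ ≤ a → a ≤ M' →
      ∃ j, j ≤ N ∧ a ≤ t j ∧ t j ≤ a + δ / 2 := by
    intro a ha1 ha2
    have hx0 : (0 : ℝ) ≤ (a + M' + δ) / (δ / 2) := div_nonneg (by linarith) hδ2.le
    refine ⟨⌈(a + M' + δ) / (δ / 2)⌉₊, ?_, ?_, ?_⟩
    · apply Nat.ceil_le_ceil
      rw [div_le_div_iff₀ hδ2 hδ]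
      nlinarith
    · have h := Nat.le_ceil ((a + M' + δ) / (δ / 2))
      have h2 : a + M' + δ ≤ (⌈(a + M' + δ) / (δ / 2)⌉₊ : ℝ) * (δ / 2) := by
        rw [← div_le_iff₀ hδ2]; exact h
      simp only [htdef]; linarith
    · have h := Nat.ceil_lt_add_one hx0
      have h2 : (⌈(a + M' + δ) / (δ / 2)⌉₊ : ℝ) * (δ / 2) < a + M' + δ + δ / 2 := by
        nlinarith [mul_lt_mul_of_pos_right h hδ2,
          div_mul_cancel₀ (a + M' + δ) hδ2.ne']
      simp only [htdef]; linarith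
  have key : ∀ n, ℙ {ω | δ < |U n ω - V n ω|} ≤ ℙ {ω | M' < |V n ω|}
      + ∑ j ∈ Finset.range (N + 1),
        (ℙ {ω | t j + δ / 2 ≤ U n ω ∧ V n ω ≤ t j}
          + ℙ {ω | U n ω ≤ t j ∧ t j + δ / 2 ≤ V n ω}) := by
    intro n
    have incl : {ω | δ < |U n ω - V n ω|} ⊆ {ω | M' < |V n ω|}
        ∪ ⋃ j ∈ Finset.range (N + 1),
          ({ω | t j + δ / 2 ≤ U n ω ∧ V n ω ≤ t j}
            ∪ {ω | U n ω ≤ t j ∧ t j + δ / 2 ≤ V n ω}) := by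
      intro ω hω
      by_cases hVb : M' < |V n ω|
      · exact Or.inl hVb
      · right
        push_neg at hVb
        have hV1 : -M' ≤ V n ω := neg_le_of_abs_le hVb
        have hV2 : V n ω ≤ M' := le_of_abs_le hVb
        simp only [Set.mem_iUnion, Finset.mem_range]
        have hω' : δ < |U n ω - V n ω| := hω
        rcases lt_abs.mp hω' with h | h
        · -- U - V > δ
          obtain ⟨j, hjN, hj1, hj2⟩ := grid (V n ω) (by linarith) hV2
          exact ⟨j, Nat.lt_succ_of_le hjN, Or.inl ⟨by linarith, hj1⟩⟩
        · -- V - U > δ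
          obtain ⟨j, hjN, hj1, hj2⟩ := grid (V n ω - δ) (by linarith) (by linarith)
          exact ⟨j, Nat.lt_succ_of_le hjN, Or.inr ⟨by linarith, by linarith⟩⟩
    calc ℙ {ω | δ < |U n ω - V n ω|} ≤ _ := measure_mono incl
      _ ≤ ℙ {ω | M' < |V n ω|} + ℙ (⋃ j ∈ Finset.range (N + 1),
          ({ω | t j + δ / 2 ≤ U n ω ∧ V n ω ≤ t j}
            ∪ {ω | U n ω ≤ t j ∧ t j + δ / 2 ≤ V n ω})) := measure_union_le _ _
      _ ≤ ℙ {ω | M' < |V n ω|} + ∑ j ∈ Finset.range (N + 1),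
          ℙ ({ω | t j + δ / 2 ≤ U n ω ∧ V n ω ≤ t j}
            ∪ {ω | U n ω ≤ t j ∧ t j + δ / 2 ≤ V n ω}) := by
          gcongr
          exact measure_biUnion_finset_le _ _
      _ ≤ _ := by
          gcongr with j hj
          exact measure_union_le _ _
  have h1 : ∀ᶠ n in atTop, ℙ {ω | M' < |V n ω|} < ENNReal.ofReal (r / 2) :=
    hM.mono fun n hn =>
      lt_of_le_of_lt (measure_mono fun ω h => lt_of_le_of_lt (le_max_left M 1) h) hn
  have h2 : Tendsto (fun n => ∑ j ∈ Finset.range (N + 1),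
      (ℙ {ω | t j + δ / 2 ≤ U n ω ∧ V n ω ≤ t j}
        + ℙ {ω | U n ω ≤ t j ∧ t j + δ / 2 ≤ V n ω})) atTop (nhds 0) := by
    have := tendsto_finset_sum (Finset.range (N + 1))
      (fun j _ => (hb1 (t j) (δ / 2) hδ2).add (hb2 (t j) (δ / 2) hδ2))
    simpa using this
  have h2' : ∀ᶠ n in atTop, (∑ j ∈ Finset.range (N + 1),
      (ℙ {ω | t j + δ / 2 ≤ U n ω ∧ V n ω ≤ t j}
        + ℙ {ω | U n ω ≤ t j ∧ t j + δ / 2 ≤ V n ω})) < ENNReal.ofReal (r / 2) :=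
    h2.eventually (gt_mem_nhds (by simp [ENNReal.ofReal_pos]; linarith))
  have hfin : ∀ᶠ n in atTop, ℙ {ω | δ < |U n ω - V n ω|} ≤ ε := by
    filter_upwards [h1, h2'] with n hn1 hn2
    calc ℙ {ω | δ < |U n ω - V n ω|} ≤ _ := key n
      _ ≤ ENNReal.ofReal (r / 2) + ENNReal.ofReal (r / 2) :=
          add_le_add hn1.le hn2.le
      _ = ENNReal.ofReal r := by
          rw [← ENNReal.ofReal_add (by linarith) (by linarith)]; ring_nf
      _ ≤ ε := hrε
  exact eventually_atTop.mp hfin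
end

section
/- Let F_n be the empirical distribution function of i.i.d. X_1,...,X_n from a continuous distribution F, and conditionally on the data let X*_1,...,X*_n be i.i.d. from F_n. Then almost surely, for all sufficiently large n, the maximum number of bootstrap observations equal to any single value is less than 2 log n; consequently, if ξ̂*_{n,1,1} is the ⌊(n+1)/2⌋-th order statistic of |X*_i - v̂*_{n,1}| with v̂*_{n,1} = X*_{⌊(n+1)/2⌋:n}, and G*_n is the empirical CDF of the |X*_i - v̂*_{n,1}|, then almost surely G*_n(ξ̂*_{n,1,1}) = 1/2 + O(log n / n) as n → ∞. -/
open MeasureTheory ProbabilityTheory Filter Set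
open scoped Classical

variable {Ω : Type*}

section TieAux
open Topology
open scoped ENNReal

/-- Sandwich for orderStat: the count at the order statistic. -/
theorem orderStat_sandwich (n k : ℕ) (Y : ℕ → ℝ) (hk1 : 1 ≤ k) (hkn : k ≤ n) :
    k ≤ ((Finset.range n).filter (fun i => Y i ≤ orderStat n k Y)).card ∧
    ((Finset.range n).filter (fun i => Y i ≤ orderStat n k Y)).card + 1 ≤
      k + ((Finset.range n).filter (fun i => Y i = orderStat n k Y)).card := by
  classical
  have hn : 0 < n := lt_of_lt_of_le hk1 hkn
  set S : Set ℝ := {x : ℝ | k ≤ ((Finset.range n).filter (fun i => Y i ≤ x)).card} with hS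
  have hne : (Finset.range n).Nonempty := Finset.nonempty_range_iff.mpr hn.ne'
  have himg : ((Finset.range n).image Y).Nonempty := hne.image Y
  -- S is nonempty
  have hSne : S.Nonempty := by
    refine ⟨((Finset.range n).image Y).max' himg, ?_⟩
    have : (Finset.range n).filter (fun i => Y i ≤ ((Finset.range n).image Y).max' himg)
        = Finset.range n := by
      apply Finset.filter_true_of_mem
      intro i hi
      exact Finset.le_max' _ _ (Finset.mem_image_of_mem Y hi)
    simp only [hS, mem_setOf_eq, this]
    simpa using hkn
  -- S is bounded below
  have hbdd : BddBelow S := by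
    refine ⟨((Finset.range n).image Y).min' himg, fun x hx => ?_⟩
    by_contra hlt
    push_neg at hlt
    have : (Finset.range n).filter (fun i => Y i ≤ x) = ∅ := by
      apply Finset.filter_false_of_mem
      intro i hi
      have := ((Finset.range n).image Y).min'_le (Y i) (Finset.mem_image_of_mem Y hi)
      linarith
    simp only [hS, mem_setOf_eq, this, Finset.card_empty] at hx
    omega
  have hq : orderStat n k Y = sInf S := rfl
  set q := orderStat n k Y with hqdef
  -- monotonicity of count
  have hmono : ∀ x y : ℝ, x ≤ y →
      ((Finset.range n).filter (fun i => Y i ≤ x)).card ≤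
      ((Finset.range n).filter (fun i => Y i ≤ y)).card := by
    intro x y hxy
    apply Finset.card_le_card
    intro i hi
    simp only [Finset.mem_filter] at hi ⊢
    exact ⟨hi.1, hi.2.trans hxy⟩
  constructor
  · -- lower bound
    set T := (Finset.range n).filter (fun i => q < Y i) with hT
    -- choose t with q < t and no Y i in (q, t]
    obtain ⟨t, hqt, ht⟩ : ∃ t : ℝ, q < t ∧ ∀ i ∈ Finset.range n, Y i ≤ t → Y i ≤ q := by
      by_cases hTne : T.Nonempty
      · have himgT : (T.image Y).Nonempty := hTne.image Y
        set m' := (T.image Y).min' himgT with hm'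
        have hqm' : q < m' := by
          have : ∀ z ∈ T.image Y, q < z := by
            intro z hz
            obtain ⟨i, hi, rfl⟩ := Finset.mem_image.mp hz
            exact (Finset.mem_filter.mp hi).2
          exact this m' (Finset.min'_mem _ _)
        refine ⟨(q + m') / 2, by linarith, fun i hi hile => ?_⟩
        by_contra hgt
        push_neg at hgt
        have hiT : i ∈ T := Finset.mem_filter.mpr ⟨hi, hgt⟩
        have := (T.image Y).min'_le (Y i) (Finset.mem_image_of_mem Y hiT)
        linarith
      · refine ⟨q + 1, by linarith, fun i hi hile => ?_⟩
        by_contra hgt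
        push_neg at hgt
        exact hTne ⟨i, Finset.mem_filter.mpr ⟨hi, hgt⟩⟩
    -- some s ∈ S with s < t
    obtain ⟨s, hsS, hst⟩ : ∃ s ∈ S, s < t := by
      by_contra h
      push_neg at h
      have : t ≤ sInf S := le_csInf hSne h
      rw [← hq] at this
      linarith
    have hks : k ≤ ((Finset.range n).filter (fun i => Y i ≤ s)).card := hsS
    calc k ≤ ((Finset.range n).filter (fun i => Y i ≤ s)).card := hks
      _ ≤ ((Finset.range n).filter (fun i => Y i ≤ t)).card := hmono _ _ hst.le
      _ ≤ ((Finset.range n).filter (fun i => Y i ≤ q)).card := by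
          apply Finset.card_le_card
          intro i hi
          simp only [Finset.mem_filter] at hi ⊢
          exact ⟨hi.1, ht i hi.1 hi.2⟩
  · -- upper bound
    have hsplit : (Finset.range n).filter (fun i => Y i ≤ q) =
        ((Finset.range n).filter (fun i => Y i < q)) ∪
        ((Finset.range n).filter (fun i => Y i = q)) := by
      ext i
      simp only [Finset.mem_union, Finset.mem_filter]
      constructor
      · rintro ⟨hi, hle⟩
        rcases lt_or_eq_of_le hle with h | h
        · exact Or.inl ⟨hi, h⟩
        · exact Or.inr ⟨hi, h⟩
      · rintro (⟨hi, h⟩ | ⟨hi, h⟩)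
        · exact ⟨hi, h.le⟩
        · exact ⟨hi, h.le⟩
    set A := (Finset.range n).filter (fun i => Y i < q) with hA
    have hAcard : A.card + 1 ≤ k := by
      by_contra h
      push_neg at h
      have hkA : k ≤ A.card := by omega
      have hAne : A.Nonempty := Finset.card_pos.mp (lt_of_lt_of_le hk1 hkA)
      have himgA : (A.image Y).Nonempty := hAne.image Y
      set t := (A.image Y).max' himgA with htdef
      have htq : t < q := by
        obtain ⟨i, hi, hYi⟩ := Finset.mem_image.mp ((A.image Y).max'_mem himgA)
        rw [hA] at hi
        calc t = Y i := hYi.symm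
          _ < q := (Finset.mem_filter.mp hi).2
      have htS : t ∈ S := by
        have : A ⊆ (Finset.range n).filter (fun i => Y i ≤ t) := by
          intro i hi
          have hile := (A.image Y).le_max' (Y i) (Finset.mem_image_of_mem Y hi)
          rw [hA] at hi
          exact Finset.mem_filter.mpr ⟨(Finset.mem_filter.mp hi).1, hile⟩
        exact le_trans hkA (Finset.card_le_card this)
      have : sInf S ≤ t := csInf_le hbdd htS
      rw [← hq] at this
      linarith
    calc ((Finset.range n).filter (fun i => Y i ≤ q)).card + 1
        ≤ A.card + ((Finset.range n).filter (fun i => Y i = q)).card + 1 := by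
          rw [hsplit]
          have := Finset.card_union_le A ((Finset.range n).filter (fun i => Y i = q))
          omega
      _ ≤ k + ((Finset.range n).filter (fun i => Y i = q)).card := by omega


/-- If the CDF of μ is continuous, μ has no atoms. -/
theorem no_atoms_of_continuous_cdf (μ : Measure ℝ) [IsProbabilityMeasure μ]
    (F : ℝ → ℝ) (hF : ∀ x, F x = (μ (Iic x)).toReal) (hFc : Continuous F) (x : ℝ) :
    μ {x} = 0 := by
  have hmono : Monotone (fun n : ℕ => Iic (x - 1 / (n + 1))) := by
    intro a b hab
    apply Iic_subset_Iic.mpr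
    have : (1:ℝ) / (b + 1) ≤ 1 / (a + 1) := by
      apply one_div_le_one_div_of_le (by positivity)
      exact_mod_cast Nat.add_le_add_right hab 1
    linarith
  have hUnion : (⋃ n : ℕ, Iic (x - 1 / ((n:ℝ) + 1))) = Iio x := by
    ext y
    simp only [mem_iUnion, mem_Iic, mem_Iio]
    constructor
    · rintro ⟨n, hn⟩
      have : (0:ℝ) < 1 / ((n:ℝ) + 1) := by positivity
      linarith
    · intro hy
      obtain ⟨n, hn⟩ := exists_nat_one_div_lt (by linarith : (0:ℝ) < x - y)
      exact ⟨n, by linarith⟩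
  have h1 : Tendsto (fun n : ℕ => μ (Iic (x - 1 / (n + 1)))) atTop (𝓝 (μ (Iio x))) := by
    have := tendsto_measure_iUnion_atTop (μ := μ) hmono
    rwa [hUnion] at this
  -- toReal tendsto
  have h2 : Tendsto (fun n : ℕ => (μ (Iic (x - 1 / (n + 1)))).toReal) atTop
      (𝓝 ((μ (Iio x)).toReal)) :=
    (ENNReal.tendsto_toReal (measure_ne_top μ _)).comp h1
  have h3 : Tendsto (fun n : ℕ => F (x - 1 / (n + 1))) atTop (𝓝 (F x)) := by
    apply hFc.continuousAt.tendsto.comp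
    have : Tendsto (fun n : ℕ => x - 1 / ((n:ℝ) + 1)) atTop (𝓝 (x - 0)) := by
      apply Tendsto.const_sub
      exact tendsto_one_div_add_atTop_nhds_zero_nat
    simpa using this
  have h4 : (μ (Iio x)).toReal = F x := by
    apply tendsto_nhds_unique _ h3
    convert h2 using 2 with n
    rw [hF]
  have h5 : μ (Iio x) = μ (Iic x) := by
    rw [hF] at h4
    exact (ENNReal.toReal_eq_toReal_iff' (measure_ne_top μ _) (measure_ne_top μ _)).mp h4
  have h6 : μ (Iic x) = μ (Iio x) + μ {x} := by
    rw [← measure_union (by simp) (measurableSet_singleton x), Iio_union_right]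
  rw [h5] at h6
  have h7 : μ (Iic x) + 0 = μ (Iic x) + μ {x} := by rw [add_zero]; exact h6
  exact ((ENNReal.add_right_inj (measure_ne_top μ _)).mp h7).symm


theorem ae_distinct {Ω : Type*} [MeasureSpace Ω] [IsProbabilityMeasure (ℙ : Measure Ω)]
    (X : ℕ → Ω → ℝ) (μ : Measure ℝ) [IsProbabilityMeasure μ]
    (hXmeas : ∀ i, Measurable (X i))
    (hXdist : ∀ i, Measure.map (X i) ℙ = μ)
    (hXindep : iIndepFun X ℙ)
    (hatom : ∀ x : ℝ, μ {x} = 0) :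
    ∀ᵐ ω ∂(ℙ : Measure Ω), ∀ i j : ℕ, i ≠ j → X i ω ≠ X j ω := by
  rw [ae_all_iff]
  intro i
  rw [ae_all_iff]
  intro j
  rw [ae_all_iff]
  intro hij
  have h1 : IndepFun (X i) (X j) ℙ := hXindep.indepFun hij
  have hmap : Measure.map (fun ω => (X i ω, X j ω)) ℙ = μ.prod μ := by
    have := (indepFun_iff_map_prod_eq_prod_map_map (hXmeas i).aemeasurable
      (hXmeas j).aemeasurable).mp h1
    rw [this, hXdist i, hXdist j]
  have hD : MeasurableSet {p : ℝ × ℝ | p.1 = p.2} :=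
    measurableSet_eq_fun measurable_fst measurable_snd
  rw [ae_iff]
  simp only [not_not]
  have : ℙ {ω | X i ω = X j ω} =
      Measure.map (fun ω => (X i ω, X j ω)) ℙ {p : ℝ × ℝ | p.1 = p.2} := by
    rw [Measure.map_apply ((hXmeas i).prodMk (hXmeas j)) hD]
    rfl
  rw [this, hmap, Measure.prod_apply hD]
  have : ∀ x : ℝ, μ (Prod.mk x ⁻¹' {p : ℝ × ℝ | p.1 = p.2}) = 0 := by
    intro x
    have : Prod.mk x ⁻¹' {p : ℝ × ℝ | p.1 = p.2} = {x} := by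
      ext y; simp [eq_comm]
    rw [this]; exact hatom x
  simp only [this]
  simp


theorem ae_J_range {Ω : Type*} [MeasureSpace Ω] [IsProbabilityMeasure (ℙ : Measure Ω)]
    (J : ℕ → ℕ → Ω → ℕ)
    (hJmeas : ∀ n i, Measurable (J n i))
    (hJunif : ∀ n i k, k < n → ℙ {ω | J n i ω = k} = (n : ENNReal)⁻¹) :
    ∀ᵐ ω ∂(ℙ : Measure Ω), ∀ n, 1 ≤ n → ∀ i, J n i ω < n := by
  rw [ae_all_iff]
  intro n
  rw [ae_all_iff]
  intro hn
  rw [ae_all_iff]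
  intro i
  rw [ae_iff]
  have hmeas : ∀ k : ℕ, MeasurableSet {ω | J n i ω = k} := by
    intro k
    exact (hJmeas n i) (measurableSet_singleton k)
  have hdisj : (↑(Finset.range n) : Set ℕ).PairwiseDisjoint
      (fun k => {ω | J n i ω = k}) := by
    intro a _ b _ hab
    apply Set.disjoint_left.mpr
    intro ω ha hb
    exact hab (ha.symm.trans hb)
  have hU : ℙ (⋃ k ∈ Finset.range n, {ω | J n i ω = k}) = 1 := by
    rw [measure_biUnion_finset hdisj (fun k _ => hmeas k)]
    have : ∀ k ∈ Finset.range n, ℙ {ω | J n i ω = k} = (n : ENNReal)⁻¹ := by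
      intro k hk
      exact hJunif n i k (Finset.mem_range.mp hk)
    rw [Finset.sum_congr rfl this, Finset.sum_const, Finset.card_range, nsmul_eq_mul]
    exact ENNReal.mul_inv_cancel (by exact_mod_cast (by omega : n ≠ 0)) (ENNReal.natCast_ne_top n)
  have hcompl : {a | ¬ J n i a < n} = (⋃ k ∈ Finset.range n, {ω | J n i ω = k})ᶜ := by
    ext ω
    simp only [mem_setOf_eq, mem_compl_iff, mem_iUnion, Finset.mem_range, not_exists,
      not_lt]
    constructor
    · intro h k hk hEq
      omega
    · intro h
      by_contra hlt
      push_neg at hlt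
      exact h (J n i ω) hlt rfl
  rw [hcompl]
  have hmeasU : MeasurableSet (⋃ k ∈ Finset.range n, {ω | J n i ω = k}) :=
    MeasurableSet.biUnion (Finset.range n).countable_toSet (fun k _ => hmeas k)
  rw [measure_compl hmeasU (measure_ne_top _ _), hU]
  simp

theorem bad_prob {Ω : Type*} [MeasureSpace Ω] [IsProbabilityMeasure (ℙ : Measure Ω)]
    (K : ℕ → Ω → ℕ) (n m : ℕ)
    (hunif : ∀ i k, k < n → ℙ {ω | K i ω = k} = (n : ENNReal)⁻¹)
    (hind : iIndepFun K ℙ) :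
    ℙ (⋃ k ∈ Finset.range n, ⋃ S ∈ Finset.powersetCard m (Finset.range n),
        ⋂ i ∈ S, {ω | K i ω = k})
      ≤ (n : ENNReal) * (n.choose m) * ((n : ENNReal)⁻¹) ^ m := by
  refine le_trans (measure_biUnion_finset_le _ _) ?_
  have hin : ∀ k ∈ Finset.range n,
      ℙ (⋃ S ∈ Finset.powersetCard m (Finset.range n), ⋂ i ∈ S, {ω | K i ω = k})
        ≤ (n.choose m : ENNReal) * ((n : ENNReal)⁻¹) ^ m := by
    intro k hk
    refine le_trans (measure_biUnion_finset_le _ _) ?_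
    have heach : ∀ S ∈ Finset.powersetCard m (Finset.range n),
        ℙ (⋂ i ∈ S, {ω | K i ω = k}) = ((n : ENNReal)⁻¹) ^ m := by
      intro S hS
      obtain ⟨hsub, hcard⟩ := Finset.mem_powersetCard.mp hS
      have : ℙ (⋂ i ∈ S, K i ⁻¹' {k}) = ∏ i ∈ S, ℙ (K i ⁻¹' {k}) :=
        hind.measure_inter_preimage_eq_mul S (sets := fun _ => ({k} : Set ℕ))
          (fun i _ => measurableSet_singleton k)
      have hpre : ∀ i : ℕ, K i ⁻¹' {k} = {ω | K i ω = k} := by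
        intro i; ext ω; simp
      simp only [hpre] at this
      rw [this]
      have : ∀ i ∈ S, ℙ {ω | K i ω = k} = (n : ENNReal)⁻¹ := fun i _ =>
        hunif i k (Finset.mem_range.mp hk)
      rw [Finset.prod_congr rfl this, Finset.prod_const, hcard]
    rw [Finset.sum_congr rfl heach, Finset.sum_const, Finset.card_powersetCard,
      Finset.card_range, nsmul_eq_mul]
  refine le_trans (Finset.sum_le_sum hin) ?_
  rw [Finset.sum_const, Finset.card_range, nsmul_eq_mul, mul_assoc]

theorem fact_ge_three_pow : ∀ m : ℕ, 7 ≤ m → 3 ^ m ≤ Nat.factorial m := by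
  intro m
  induction m with
  | zero => omega
  | succ k ih =>
    intro h
    rcases Nat.lt_or_ge k 7 with hk | hk
    · have : k = 6 := by omega
      subst this
      decide
    · have h1 := ih hk
      have h2 : 3 ^ (k + 1) = 3 * 3 ^ k := by ring
      have h3 : Nat.factorial (k + 1) = (k + 1) * Nat.factorial k := rfl
      have : 3 * 3 ^ k ≤ (k + 1) * Nat.factorial k :=
        Nat.mul_le_mul (by omega) h1
      omega

theorem real_bound (n m : ℕ) (hn : 1 ≤ n) (hm7 : 7 ≤ m)
    (hmlog : 2 * Real.log n ≤ m) :
    (n : ℝ) * (n.choose m) * ((n : ℝ)⁻¹) ^ m ≤ (n : ℝ) ^ (1 - 2 * Real.log 3) := by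
  have hn0 : (0 : ℝ) < n := by exact_mod_cast hn
  have hnm : (0 : ℝ) < (n : ℝ) ^ m := by positivity
  have hfact : (0 : ℝ) < (Nat.factorial m : ℝ) := by
    exact_mod_cast Nat.factorial_pos m
  have hchoose : (n.choose m : ℝ) ≤ (n : ℝ) ^ m / (Nat.factorial m : ℝ) :=
    Nat.choose_le_pow_div m n
  have h2 : (3 : ℝ) ^ m ≤ (Nat.factorial m : ℝ) := by
    exact_mod_cast fact_ge_three_pow m hm7
  have h3 : (n : ℝ) ^ (2 * Real.log 3) ≤ (3 : ℝ) ^ m := by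
    have e1 : (n : ℝ) ^ (2 * Real.log 3) = Real.exp (Real.log n * (2 * Real.log 3)) :=
      Real.rpow_def_of_pos hn0 _
    have e2 : (3 : ℝ) ^ (2 * Real.log n) = Real.exp (Real.log 3 * (2 * Real.log n)) :=
      Real.rpow_def_of_pos (by norm_num) _
    have e3 : (3 : ℝ) ^ (2 * Real.log n) ≤ (3 : ℝ) ^ (m : ℝ) :=
      Real.rpow_le_rpow_of_exponent_le (by norm_num) hmlog
    rw [Real.rpow_natCast] at e3
    calc (n : ℝ) ^ (2 * Real.log 3) = Real.exp (Real.log n * (2 * Real.log 3)) := e1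
      _ = Real.exp (Real.log 3 * (2 * Real.log n)) := by ring_nf
      _ = (3 : ℝ) ^ (2 * Real.log n) := e2.symm
      _ ≤ (3 : ℝ) ^ m := e3
  have h4 : (0:ℝ) < (n : ℝ) ^ (2 * Real.log 3) := by positivity
  calc (n : ℝ) * (n.choose m) * ((n : ℝ)⁻¹) ^ m
      = (n : ℝ) * (n.choose m) / (n : ℝ) ^ m := by rw [inv_pow]; ring
    _ ≤ (n : ℝ) * ((n : ℝ) ^ m / (Nat.factorial m : ℝ)) / (n : ℝ) ^ m := by gcongr
    _ = (n : ℝ) / (Nat.factorial m : ℝ) := by field_simp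
    _ ≤ (n : ℝ) / (n : ℝ) ^ (2 * Real.log 3) := by
        apply div_le_div_of_nonneg_left (le_of_lt hn0) h4
        exact le_trans h3 h2
    _ = (n : ℝ) ^ (1 - 2 * Real.log 3) := by
        rw [Real.rpow_sub hn0, Real.rpow_one]

theorem summable_bound : Summable (fun n : ℕ => (n : ℝ) ^ (1 - 2 * Real.log 3)) := by
  apply Real.summable_nat_rpow.mpr
  have h1 : Real.exp 1 < 3 := lt_trans Real.exp_one_lt_d9 (by norm_num)
  have h2 : (1 : ℝ) < Real.log 3 := (Real.lt_log_iff_exp_lt (by norm_num)).mpr h1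
  linarith


variable {Ω : Type*} [MeasureSpace Ω] [IsProbabilityMeasure (ℙ : Measure Ω)]

theorem ae_tie_bound (J : ℕ → ℕ → Ω → ℕ)
    (hJmeas : ∀ n i, Measurable (J n i))
    (hJunif : ∀ n i k, k < n → ℙ {ω | J n i ω = k} = (n : ENNReal)⁻¹)
    (hJindep : ∀ n, iIndepFun (J n) ℙ) :
    ∀ᵐ ω ∂(ℙ : Measure Ω), ∀ᶠ n : ℕ in atTop, ∀ k : ℕ,
      (((Finset.range n).filter (fun i => J n i ω = k)).card : ℝ) < 2 * Real.log n := by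
  classical
  set m : ℕ → ℕ := fun n => ⌈2 * Real.log n⌉₊ with hm
  set bad : ℕ → Set Ω := fun n => ⋃ k ∈ Finset.range n,
    ⋃ S ∈ Finset.powersetCard (m n) (Finset.range n), ⋂ i ∈ S, {ω | J n i ω = k} with hbad
  -- threshold
  have hlog : ∀ᶠ n : ℕ in atTop, (7 : ℝ) ≤ 2 * Real.log n := by
    have h1 : Tendsto (fun n : ℕ => Real.log n) atTop atTop :=
      Real.tendsto_log_atTop.comp tendsto_natCast_atTop_atTop
    filter_upwards [h1.eventually_ge_atTop (7 / 2)] with n hn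
    linarith
  obtain ⟨N, hN⟩ := eventually_atTop.mp hlog
  set M := max N 1 with hM
  -- summability
  have hsum : (∑' n : ℕ, ℙ (bad n)) ≠ ∞ := by
    have hpt : ∀ n : ℕ, ℙ (bad n) ≤
        ENNReal.ofReal ((n : ℝ) ^ (1 - 2 * Real.log 3)) +
          (if n < M then 1 else 0) := by
      intro n
      rcases Nat.lt_or_ge n M with h | h
      · rw [if_pos h]
        calc ℙ (bad n) ≤ 1 := prob_le_one
          _ ≤ _ := le_add_self
      · rw [if_neg (by omega)]
        rw [add_zero]
        have hn1 : 1 ≤ n := le_trans (le_max_right N 1) h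
        have hlogn : (7 : ℝ) ≤ 2 * Real.log n := hN n (le_trans (le_max_left N 1) h)
        have hm7 : 7 ≤ m n := by
          have := le_trans hlogn (Nat.le_ceil (2 * Real.log n))
          exact_mod_cast this
        have hmlog : 2 * Real.log n ≤ m n := Nat.le_ceil _
        calc ℙ (bad n)
            ≤ (n : ENNReal) * (n.choose (m n)) * ((n : ENNReal)⁻¹) ^ (m n) :=
              bad_prob (J n) n (m n) (hJunif n) (hJindep n)
          _ = ENNReal.ofReal ((n : ℝ) * (n.choose (m n)) * ((n : ℝ)⁻¹) ^ (m n)) := by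
              rw [ENNReal.ofReal_mul (by positivity), ENNReal.ofReal_mul (by positivity),
                ENNReal.ofReal_pow (by positivity), ENNReal.ofReal_natCast,
                ENNReal.ofReal_natCast,
                ENNReal.ofReal_inv_of_pos (by exact_mod_cast hn1),
                ENNReal.ofReal_natCast]
          _ ≤ ENNReal.ofReal ((n : ℝ) ^ (1 - 2 * Real.log 3)) :=
              ENNReal.ofReal_le_ofReal (real_bound n (m n) hn1 hm7 hmlog)
    refine ne_top_of_le_ne_top ?_ (ENNReal.tsum_le_tsum hpt)
    rw [ENNReal.tsum_add]
    apply ENNReal.add_ne_top.mpr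
    constructor
    · rw [← ENNReal.ofReal_tsum_of_nonneg (fun n => Real.rpow_nonneg (Nat.cast_nonneg n) _)
        summable_bound]
      exact ENNReal.ofReal_ne_top
    · have : (∑' n : ℕ, (if n < M then (1 : ENNReal) else 0)) =
          ∑ n ∈ Finset.range M, (if n < M then (1 : ENNReal) else 0) := by
        apply tsum_eq_sum
        intro n hn
        rw [if_neg (by simpa using hn)]
      rw [this]
      refine ne_top_of_le_ne_top (b := (M : ENNReal)) (ENNReal.natCast_ne_top M) ?_
      calc ∑ n ∈ Finset.range M, (if n < M then (1 : ENNReal) else 0)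
          ≤ ∑ n ∈ Finset.range M, 1 := Finset.sum_le_sum (fun n _ => by split <;> simp)
        _ = M := by simp
  filter_upwards [ae_eventually_notMem hsum, ae_J_range J hJmeas hJunif] with ω hω hrange
  filter_upwards [hω, eventually_ge_atTop 2] with n hn hn2 k
  have hn1 : 1 ≤ n := by omega
  have hlogpos : (0 : ℝ) < 2 * Real.log n := by
    have : (0:ℝ) < Real.log n := Real.log_pos (by exact_mod_cast hn2)
    linarith
  by_contra hge
  push_neg at hge
  set c := ((Finset.range n).filter (fun i => J n i ω = k)).card with hc
  have hcpos : 0 < c := by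
    by_contra h0
    push_neg at h0
    interval_cases c
    · exact absurd hge (by push_neg; exact_mod_cast hlogpos)
  have hkn : k < n := by
    obtain ⟨i, hi⟩ := Finset.card_pos.mp hcpos
    obtain ⟨hi1, hi2⟩ := Finset.mem_filter.mp hi
    rw [← hi2]
    exact hrange n hn1 i
  have hmn : m n ≤ c := Nat.ceil_le.mpr hge
  obtain ⟨S, hSsub, hScard⟩ := Finset.exists_subset_card_eq hmn
  apply hn
  rw [hbad]
  simp only [mem_iUnion]
  refine ⟨k, Finset.mem_range.mpr hkn, S, ?_, ?_⟩
  · exact Finset.mem_powersetCard.mpr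
      ⟨hSsub.trans (Finset.filter_subset _ _), hScard⟩
  · simp only [mem_iInter, mem_setOf_eq]
    intro i hi
    exact (Finset.mem_filter.mp (hSsub hi)).2

end TieAux

theorem bootstrap_tie_control {Ω : Type*}
    [MeasureSpace Ω] [IsProbabilityMeasure (ℙ : Measure Ω)]
    (X : ℕ → Ω → ℝ) (J : ℕ → ℕ → Ω → ℕ)
    (μ : Measure ℝ) [IsProbabilityMeasure μ]
    (hXmeas : ∀ i, Measurable (X i))
    (hXdist : ∀ i, Measure.map (X i) ℙ = μ)
    (hXindep : iIndepFun X ℙ)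
    (hJmeas : ∀ n i, Measurable (J n i))
    (hJunif : ∀ n i k, k < n → ℙ {ω | J n i ω = k} = (n : ENNReal)⁻¹)
    (hJindep : ∀ n, iIndepFun (J n) ℙ)
    (hXJ : ∀ n, IndepFun (fun ω (i : ℕ) => X i ω) (fun ω (i : ℕ) => J n i ω) ℙ)
    (F : ℝ → ℝ) (hF : ∀ x, F x = (μ (Iic x)).toReal)
    (hFc : Continuous F) :
    (∀ᵐ ω ∂(ℙ : Measure Ω), ∀ᶠ n : ℕ in atTop, ∀ x : ℝ,
        (((Finset.range n).filter (fun i => bsample X J n i ω = x)).card : ℝ) <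
          2 * Real.log n) ∧
    (∀ᵐ ω ∂(ℙ : Measure Ω), ∃ C : ℝ, ∀ᶠ n : ℕ in atTop,
        |empCDF n (fun i => |bsample X J n i ω - bmed X J n 1 ω|) (bmad X J n 1 1 ω)
          - 1 / 2| ≤ C * Real.log n / n) := by
  have hatom : ∀ x : ℝ, μ {x} = 0 := no_atoms_of_continuous_cdf μ F hF hFc
  have hdist := ae_distinct X μ hXmeas hXdist hXindep hatom
  have hrange := ae_J_range J hJmeas hJunif
  have htie := ae_tie_bound J hJmeas hJunif hJindep
  have part1 : ∀ᵐ ω ∂(ℙ : Measure Ω), ∀ᶠ n : ℕ in atTop, ∀ x : ℝ,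
      (((Finset.range n).filter (fun i => bsample X J n i ω = x)).card : ℝ) <
        2 * Real.log n := by
    filter_upwards [hdist, hrange, htie] with ω hdistω hrangeω htieω
    filter_upwards [htieω, eventually_ge_atTop 2] with n htien hn2
    intro x
    have hlogpos : (0 : ℝ) < 2 * Real.log n := by
      have : (0:ℝ) < Real.log n := Real.log_pos (by exact_mod_cast hn2)
      linarith
    by_cases hx : ∃ k, k < n ∧ X k ω = x
    · obtain ⟨k, hk, hXk⟩ := hx
      have hsub : (Finset.range n).filter (fun i => bsample X J n i ω = x) ⊆
          (Finset.range n).filter (fun i => J n i ω = k) := by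
        intro i hi
        obtain ⟨hi1, hi2⟩ := Finset.mem_filter.mp hi
        refine Finset.mem_filter.mpr ⟨hi1, ?_⟩
        by_contra hne
        exact hdistω _ _ hne (hi2.trans hXk.symm)
      calc (((Finset.range n).filter (fun i => bsample X J n i ω = x)).card : ℝ)
          ≤ (((Finset.range n).filter (fun i => J n i ω = k)).card : ℝ) := by
            exact_mod_cast Finset.card_le_card hsub
        _ < 2 * Real.log n := htien k
    · have hempty : (Finset.range n).filter (fun i => bsample X J n i ω = x) = ∅ := by
        apply Finset.filter_false_of_mem
        intro i hi
        intro hEq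
        exact hx ⟨J n i ω, hrangeω n (by omega) i, hEq⟩
      rw [hempty]
      simpa using hlogpos
  refine ⟨part1, ?_⟩
  filter_upwards [part1] with ω hω
  refine ⟨4, ?_⟩
  filter_upwards [hω, eventually_ge_atTop 1] with n h1 hn1
  set v := bmed X J n 1 ω with hv
  set Y : ℕ → ℝ := fun i => |bsample X J n i ω - v| with hY
  set k := (n + 1) / 2 with hk
  have hk1 : 1 ≤ k := by omega
  have hkn : k ≤ n := by omega
  obtain ⟨hlow, hupp⟩ := orderStat_sandwich n k Y hk1 hkn
  set q := orderStat n k Y with hqdef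
  have hbmad : bmad X J n 1 1 ω = q := rfl
  set c := ((Finset.range n).filter (fun i => Y i ≤ q)).card with hc
  set T := ((Finset.range n).filter (fun i => Y i = q)).card with hT
  have hempc : empCDF n (fun i => |bsample X J n i ω - bmed X J n 1 ω|)
      (bmad X J n 1 1 ω) = (c : ℝ) / n := rfl
  -- q ≥ 0
  have hq0 : (0:ℝ) ≤ q := by
    have hcpos : 0 < c := lt_of_lt_of_le hk1 hlow
    obtain ⟨i, hi⟩ := Finset.card_pos.mp hcpos
    obtain ⟨hi1, hi2⟩ := Finset.mem_filter.mp hi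
    exact le_trans (abs_nonneg _) hi2
  -- tie bound
  have hTsub : (Finset.range n).filter (fun i => Y i = q) ⊆
      ((Finset.range n).filter (fun i => bsample X J n i ω = v + q)) ∪
      ((Finset.range n).filter (fun i => bsample X J n i ω = v - q)) := by
    intro i hi
    obtain ⟨hi1, hi2⟩ := Finset.mem_filter.mp hi
    rw [hY] at hi2
    simp only [Finset.mem_union, Finset.mem_filter]
    rcases abs_eq hq0 |>.mp hi2 with h | h
    · exact Or.inl ⟨hi1, by linarith⟩
    · exact Or.inr ⟨hi1, by linarith⟩
  have hTbound : (T : ℝ) < 4 * Real.log n := by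
    have h2 := Finset.card_le_card hTsub
    have h3 := Finset.card_union_le
      ((Finset.range n).filter (fun i => bsample X J n i ω = v + q))
      ((Finset.range n).filter (fun i => bsample X J n i ω = v - q))
    have h4 := h1 (v + q)
    have h5 := h1 (v - q)
    have h6 : (T : ℝ) ≤
        (((Finset.range n).filter (fun i => bsample X J n i ω = v + q)).card : ℝ) +
        (((Finset.range n).filter (fun i => bsample X J n i ω = v - q)).card : ℝ) := by
      exact_mod_cast le_trans h2 h3
    linarith
  -- numeric conclusion
  have hn0 : (0:ℝ) < n := by exact_mod_cast hn1
  have hlognn : (0:ℝ) ≤ Real.log n := Real.log_natCast_nonneg n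
  have h2k : n ≤ 2 * k ∧ 2 * k ≤ n + 1 := by omega
  have h2kr : (n:ℝ) ≤ 2 * k := by exact_mod_cast h2k.1
  have h2kr' : 2 * (k:ℝ) ≤ (n:ℝ) + 1 := by exact_mod_cast h2k.2
  have hcl : (k:ℝ) ≤ c := by exact_mod_cast hlow
  have hcu : (c:ℝ) + 1 ≤ (k:ℝ) + T := by exact_mod_cast hupp
  rw [hempc, abs_le]
  constructor
  · have hhalf : (1:ℝ)/2 ≤ (c:ℝ)/n := by
      rw [div_le_div_iff₀ (by norm_num) hn0]
      linarith
    have hpos : (0:ℝ) ≤ 4 * Real.log n / n := by positivity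
    linarith
  · have hkey : (c:ℝ) ≤ 4 * Real.log n + (n:ℝ)/2 := by linarith
    calc (c:ℝ)/n - 1/2 ≤ (4 * Real.log n + (n:ℝ)/2)/n - 1/2 := by gcongr
      _ = 4 * Real.log n / n + ((n:ℝ)/2)/n - 1/2 := by rw [add_div]
      _ = 4 * Real.log n / n := by
          have hhalf : ((n:ℝ)/2)/n = 1/2 := by
            field_simp
          rw [hhalf]
          ring
end
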